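/- For every n ≥ 5 with n ≡ 1 (mod 4), the decycling number of the cube of the n-cycle equals (n+1)/2: ∇(Cₙ³) = (n+1)/2. -/

import Mathlib

open SimpleGraph

/-- `S` is a decycling set of `G` if the subgraph of `G` induced on the complement of `S`
is acyclic. -/
def SimpleGraph.IsDecyclingSet {V : Type*} (G : SimpleGraph V) (S : Set V) : Prop :=
  (G.induce Sᶜ).IsAcyclic

/-- The decycling number `∇(G)` of `G`: the minimum cardinality of a decycling set of `G`. -/
noncomputable def SimpleGraph.decyclingNumber {V : Type*} (G : SimpleGraph V) : ℕ :=
  sInf {k | ∃ S : Set V, G.IsDecyclingSet S ∧ S.ncard = k}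

/-- The cube `Cₙ³` of the `n`-cycle: vertex set `ZMod n`, with `i` adjacent to `j` iff
`i ≠ j` and `i - j ≡ ±1`, `±2`, or `±3 (mod n)`. -/
def cycleCube (n : ℕ) : SimpleGraph (ZMod n) where
  Adj i j := i ≠ j ∧ (i - j = 1 ∨ j - i = 1 ∨ i - j = 2 ∨ j - i = 2 ∨ i - j = 3 ∨ j - i = 3)
  symm := by constructor; intro i j ⟨h, hd⟩; exact ⟨h.symm, by tauto⟩
  loopless := by constructor; intro i ⟨h, _⟩; exact h rfl

/- ### Auxiliary lemmas -/

lemma DCC.count_lemma (k : ℕ) :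
    ((Finset.range (4*k)).filter (fun j => j % 4 ≤ 1)).card = 2*k := by
  induction k with
  | zero => simp
  | succ k ih =>
    have h : 4*(k+1) = (4*k)+1+1+1+1 := by ring
    rw [h]
    rw [Finset.range_add_one, Finset.filter_insert, Finset.range_add_one, Finset.filter_insert,
      Finset.range_add_one, Finset.filter_insert, Finset.range_add_one, Finset.filter_insert]
    have h3 : ¬ ((4*k+1+1+1) % 4 ≤ 1) := by omega
    have h2 : ¬ ((4*k+1+1) % 4 ≤ 1) := by omega
    have h1 : ((4*k+1) % 4 ≤ 1) := by omega
    have h0 : ((4*k) % 4 ≤ 1) := by omega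
    rw [if_neg h3, if_neg h2, if_pos h1, if_pos h0]
    rw [Finset.card_insert_of_notMem
        (by simp only [Finset.mem_insert, Finset.mem_filter, Finset.mem_range]; omega),
      Finset.card_insert_of_notMem
        (by simp only [Finset.mem_insert, Finset.mem_filter, Finset.mem_range]; omega)]
    omega

lemma DCC.card_T (n k : ℕ) (hn : n = 4*k+1) :
    ({v : ZMod n | v.val % 4 ≤ 1 ∧ v.val < 4*k} : Set (ZMod n)).ncard = 2*k := by
  haveI : NeZero n := ⟨by omega⟩
  rw [Set.ncard_eq_toFinset_card']
  rw [show (2*k) = ((Finset.range (4*k)).filter (fun j => j % 4 ≤ 1)).card from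
    (DCC.count_lemma k).symm]
  apply Finset.card_bij (fun v _ => v.val)
  · intro v hv
    simp only [Set.mem_toFinset, Set.mem_setOf_eq] at hv
    simp only [Finset.mem_filter, Finset.mem_range]
    omega
  · intro a ha b hb h
    exact ZMod.val_injective _ h
  · intro j hj
    simp only [Finset.mem_filter, Finset.mem_range] at hj
    refine ⟨(j : ZMod n), ?_, ?_⟩
    · simp only [Set.mem_toFinset, Set.mem_setOf_eq]
      rw [ZMod.val_cast_of_lt (by omega)]
      omega
    · rw [ZMod.val_cast_of_lt (by omega)]

lemma DCC.adj_small (n : ℕ) (hn : 5 ≤ n) (x : ZMod n) (i j : ℕ) (hi : i < 4) (hj : j < 4)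
    (hij : i ≠ j) : (cycleCube n).Adj (x + i) (x + j) := by
  haveI : NeZero n := ⟨by omega⟩
  constructor
  · intro h
    have : (i : ZMod n) = j := add_left_cancel h
    apply hij
    have := congrArg ZMod.val this
    rwa [ZMod.val_cast_of_lt (by omega), ZMod.val_cast_of_lt (by omega)] at this
  · have h1 : (x + i) - (x + j) = (i : ZMod n) - j := by ring
    have h2 : (x + j) - (x + i) = (j : ZMod n) - i := by ring
    rw [h1, h2]
    interval_cases i <;> interval_cases j <;> push_cast <;>
      first | omega | (ring_nf; simp)

lemma DCC.lower_bound (n k : ℕ) (hn : 5 ≤ n) (hk : n = 4*k+1) (S : Set (ZMod n))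
    (hS : (cycleCube n).IsDecyclingSet S) : 2*k+1 ≤ S.ncard := by
  haveI : NeZero n := ⟨by omega⟩
  classical
  by_contra hlt
  push_neg at hlt
  have hcard : 2*k+1 ≤ Sᶜ.toFinset.card := by
    have h1 := Set.ncard_add_ncard_compl S
    have h3 : Sᶜ.ncard = Sᶜ.toFinset.card := Set.ncard_eq_toFinset_card' _
    have h2 : Nat.card (ZMod n) = n := by
      simp [Nat.card_eq_fintype_card, ZMod.card]
    omega
  set Tf : Finset (ZMod n) := Sᶜ.toFinset with hTf
  have hsum : ∑ x : ZMod n, ((Finset.range 4).filter (fun i : ℕ => x + (i:ZMod n) ∈ Tf)).card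
      = 4 * Tf.card := by
    have : ∀ x : ZMod n, ((Finset.range 4).filter (fun i : ℕ => x + (i:ZMod n) ∈ Tf)).card
        = ∑ i ∈ Finset.range 4, if x + (i:ZMod n) ∈ Tf then 1 else 0 := by
      intro x; rw [Finset.card_filter]
    simp_rw [this]
    rw [Finset.sum_comm]
    have : ∀ i ∈ Finset.range 4, (∑ x : ZMod n, if x + (i:ZMod n) ∈ Tf then 1 else 0)
        = Tf.card := by
      intro i _
      rw [← Finset.card_filter]
      apply Finset.card_bij (fun x _ => x + (i:ZMod n))
      · intro x hx; simpa using (Finset.mem_filter.mp hx).2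
      · intro a _ b _ h; exact add_right_cancel h
      · intro t ht; exact ⟨t - i, by simpa using ht, by ring⟩
    rw [Finset.sum_congr rfl this]
    simp [Finset.sum_const]
  have hex : ∃ x : ZMod n,
      3 ≤ ((Finset.range 4).filter (fun i : ℕ => x + (i:ZMod n) ∈ Tf)).card := by
    by_contra hno
    push_neg at hno
    have hb : ∑ x : ZMod n, ((Finset.range 4).filter (fun i : ℕ => x + (i:ZMod n) ∈ Tf)).card
        ≤ ∑ _x : ZMod n, 2 := by
      apply Finset.sum_le_sum; intro x _; exact Nat.lt_succ_iff.mp (hno x)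
    rw [hsum] at hb
    simp only [Finset.sum_const, Finset.card_univ, ZMod.card, smul_eq_mul] at hb
    omega
  obtain ⟨x, hx⟩ := hex
  obtain ⟨t, hts, ht3⟩ := Finset.exists_subset_card_eq hx
  obtain ⟨i, j, l, hij, hil, hjl, rfl⟩ := Finset.card_eq_three.mp ht3
  have hmem : ∀ m ∈ ({i, j, l} : Finset ℕ), m < 4 ∧ x + (m:ZMod n) ∈ Sᶜ := by
    intro m hm
    have := hts hm
    simp only [Finset.mem_filter, Finset.mem_range] at this
    exact ⟨this.1, by simpa [hTf] using this.2⟩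
  obtain ⟨hi4, hiT⟩ := hmem i (by simp)
  obtain ⟨hj4, hjT⟩ := hmem j (by simp)
  obtain ⟨hl4, hlT⟩ := hmem l (by simp)
  set G' := (cycleCube n).induce Sᶜ with hG'
  set A : ↥Sᶜ := ⟨x + (i:ZMod n), hiT⟩
  set B : ↥Sᶜ := ⟨x + (j:ZMod n), hjT⟩
  set C : ↥Sᶜ := ⟨x + (l:ZMod n), hlT⟩
  have hNE : ∀ (p q : ℕ), p < 4 → q < 4 → p ≠ q → x + (p:ZMod n) ≠ x + (q:ZMod n) := by
    intro p q hp hq hpq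
    exact (DCC.adj_small n hn x p q hp hq hpq).1
  have hAB : G'.Adj A B := by
    simp only [hG', comap_adj, Function.Embedding.coe_subtype]
    exact DCC.adj_small n hn x i j hi4 hj4 hij
  have hAC : G'.Adj A C := by
    simp only [hG', comap_adj, Function.Embedding.coe_subtype]
    exact DCC.adj_small n hn x i l hi4 hl4 hil
  have hCB : G'.Adj C B := by
    simp only [hG', comap_adj, Function.Embedding.coe_subtype]
    exact DCC.adj_small n hn x l j hl4 hj4 (fun h => hjl h.symm)
  have hbr := (isAcyclic_iff_forall_adj_isBridge.mp hS) hAB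
  rw [isBridge_iff] at hbr
  apply hbr
  have hCA : C ≠ A := by
    intro h
    exact hNE l i hl4 hi4 (fun h' => hil h'.symm) (congrArg Subtype.val h)
  have hCB' : C ≠ B := by
    intro h
    exact hNE l j hl4 hj4 (fun h' => hjl h'.symm) (congrArg Subtype.val h)
  have e1 : (G' \ fromEdgeSet {s(A, B)}).Adj A C := by
    rw [sdiff_adj]
    refine ⟨hAC, ?_⟩
    rw [fromEdgeSet_adj]
    rintro ⟨he, -⟩
    simp only [Set.mem_singleton_iff, Sym2.eq_iff] at he
    rcases he with ⟨-, h⟩ | ⟨h, -⟩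
    · exact hCB' h
    · exact hAB.ne h
  have e2 : (G' \ fromEdgeSet {s(A, B)}).Adj C B := by
    rw [sdiff_adj]
    refine ⟨hCB, ?_⟩
    rw [fromEdgeSet_adj]
    rintro ⟨he, -⟩
    simp only [Set.mem_singleton_iff, Sym2.eq_iff] at he
    rcases he with ⟨h, -⟩ | ⟨h, -⟩
    · exact hCA h
    · exact hCB' h
  exact e1.reachable.trans e2.reachable

lemma DCC.val_of_sub_eq {n : ℕ} [NeZero n] (u v : ZMod n) (c : ℕ) (hcn : c < n)
    (h : u - v = (c : ZMod n)) : u.val = v.val + c ∨ u.val + n = v.val + c := by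
  have h2 : u = v + (c : ZMod n) := by rw [← h]; ring
  have h3 : u.val = (v.val + c) % n := by
    rw [h2, ZMod.val_add, ZMod.val_cast_of_lt hcn]
  have hv := ZMod.val_lt v
  rcases lt_or_ge (v.val + c) n with hlt|hge
  · left; rw [Nat.mod_eq_of_lt hlt] at h3; omega
  · right; rw [Nat.mod_eq_sub_mod hge, Nat.mod_eq_of_lt (by omega)] at h3; omega

lemma DCC.adj_vals (n k : ℕ) (hn : 5 ≤ n) (hk : n = 4*k+1) (u v : ZMod n)
    (hu1 : u.val % 4 ≤ 1) (hu2 : u.val < 4*k) (hv1 : v.val % 4 ≤ 1) (hv2 : v.val < 4*k)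
    (h : (cycleCube n).Adj u v) :
    (2*(u.val/4) + u.val%4) = (2*(v.val/4) + v.val%4) + 1 ∨
    (2*(v.val/4) + v.val%4) = (2*(u.val/4) + u.val%4) + 1 := by
  haveI : NeZero n := ⟨by omega⟩
  obtain ⟨hne, hd⟩ := h
  have hcast : ∀ c : ℕ, c < n → ∀ a b : ZMod n, a - b = (c : ZMod n) →
      a.val = b.val + c ∨ a.val + n = b.val + c := fun c hc a b => DCC.val_of_sub_eq a b c hc
  have key : (u.val = v.val + 1 ∨ u.val + n = v.val + 1) ∨
      (v.val = u.val + 1 ∨ v.val + n = u.val + 1) ∨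
      (u.val = v.val + 2 ∨ u.val + n = v.val + 2) ∨
      (v.val = u.val + 2 ∨ v.val + n = u.val + 2) ∨
      (u.val = v.val + 3 ∨ u.val + n = v.val + 3) ∨
      (v.val = u.val + 3 ∨ v.val + n = u.val + 3) := by
    rcases hd with h|h|h|h|h|h
    · exact Or.inl (hcast 1 (by omega) u v (by exact_mod_cast h))
    · exact Or.inr (Or.inl (hcast 1 (by omega) v u (by exact_mod_cast h)))
    · exact Or.inr (Or.inr (Or.inl (hcast 2 (by omega) u v (by exact_mod_cast h))))
    · exact Or.inr (Or.inr (Or.inr (Or.inl (hcast 2 (by omega) v u (by exact_mod_cast h)))))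
    · exact Or.inr (Or.inr (Or.inr (Or.inr (Or.inl
        (hcast 3 (by omega) u v (by exact_mod_cast h))))))
    · exact Or.inr (Or.inr (Or.inr (Or.inr (Or.inr
        (hcast 3 (by omega) v u (by exact_mod_cast h))))))
  omega

lemma DCC.upper_acyclic (n k : ℕ) (hn : 5 ≤ n) (hk : n = 4*k+1) :
    ((cycleCube n).induce {v : ZMod n | v.val % 4 ≤ 1 ∧ v.val < 4*k}).IsAcyclic := by
  haveI : NeZero n := ⟨by omega⟩
  set T : Set (ZMod n) := {v : ZMod n | v.val % 4 ≤ 1 ∧ v.val < 4*k} with hT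
  set f : ↥T → ℕ := fun v => 2*((v:ZMod n).val/4) + (v:ZMod n).val%4 with hf
  have hprop : ∀ v : ↥T, (v:ZMod n).val % 4 ≤ 1 ∧ (v:ZMod n).val < 4*k := fun v => v.2
  have hcons : ∀ {u v : ↥T}, ((cycleCube n).induce T).Adj u v →
      f u = f v + 1 ∨ f v = f u + 1 := by
    intro u v huv
    simp only [comap_adj, Function.Embedding.coe_subtype] at huv
    exact DCC.adj_vals n k hn hk u v (hprop u).1 (hprop u).2 (hprop v).1 (hprop v).2 huv
  have finj : ∀ u v : ↥T, f u = f v → u = v := by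
    intro u v h
    have : (u:ZMod n).val = (v:ZMod n).val := by
      have hu := hprop u; have hv := hprop v
      simp only [hf] at h
      omega
    exact Subtype.ext (ZMod.val_injective _ this)
  rw [isAcyclic_iff_forall_adj_isBridge]
  have noreach : ∀ u v : ↥T, ((cycleCube n).induce T).Adj u v → f v = f u + 1 →
      ¬((cycleCube n).induce T \ fromEdgeSet {s(u, v)}).Reachable u v := by
    intro u v huv hfv hreach
    obtain ⟨w⟩ := hreach
    have key : ∀ {a b : ↥T}, ((cycleCube n).induce T \ fromEdgeSet {s(u, v)}).Walk a b →
        ((f a ≤ f u) ↔ (f b ≤ f u)) := by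
      intro a b w
      induction w with
      | nil => exact Iff.rfl
      | @cons a c b h p ih =>
        refine Iff.trans ?_ ih
        rw [sdiff_adj, fromEdgeSet_adj] at h
        obtain ⟨hadj, hne⟩ := h
        have hd := hcons hadj
        constructor
        · intro hale
          by_contra hc
          push_neg at hc
          have h1 : f c = f a + 1 := by omega
          have h2 : f a = f u := by omega
          have h3 : f c = f v := by omega
          exact hne ⟨by rw [finj a u h2, finj c v h3]; exact rfl, hadj.ne⟩
        · intro hcle
          by_contra hc
          push_neg at hc
          have h1 : f a = f c + 1 := by omega
          have h2 : f c = f u := by omega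
          have h3 : f a = f v := by omega
          have : s(a, c) = s(u, v) := by
            rw [finj a v h3, finj c u h2, Sym2.eq_swap]
          exact hne ⟨by rw [this]; exact rfl, hadj.ne⟩
    have := key w
    omega
  intro u v huv
  rw [isBridge_iff]
  rcases hcons huv with h|h
  · intro hreach
    exact noreach v u huv.symm h (by rwa [Sym2.eq_swap, reachable_comm] at hreach)
  · exact noreach u v huv h

/-- For every `n ≥ 5` with `n ≡ 1 (mod 4)`, `∇(Cₙ³) = (n+1)/2`. -/
theorem decyclingNumber_cycleCube_one_mod_four (n : ℕ) (hn : 5 ≤ n) (h4 : n % 4 = 1) :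
    (cycleCube n).decyclingNumber = (n + 1) / 2 := by
  haveI : NeZero n := ⟨by omega⟩
  set k := n / 4 with hk4
  have hk : n = 4*k+1 := by omega
  have hgoal : (n + 1) / 2 = 2*k+1 := by omega
  rw [hgoal, SimpleGraph.decyclingNumber]
  set T : Set (ZMod n) := {v : ZMod n | v.val % 4 ≤ 1 ∧ v.val < 4*k} with hT
  have hmem : (2*k+1) ∈ {m | ∃ S : Set (ZMod n), (cycleCube n).IsDecyclingSet S ∧
      S.ncard = m} := by
    refine ⟨Tᶜ, ?_, ?_⟩
    · show ((cycleCube n).induce Tᶜᶜ).IsAcyclic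
      rw [compl_compl]
      exact DCC.upper_acyclic n k hn hk
    · have h1 := Set.ncard_add_ncard_compl T
      have h2 : Nat.card (ZMod n) = n := by
        simp [Nat.card_eq_fintype_card, ZMod.card]
      have h3 : T.ncard = 2*k := DCC.card_T n k hk
      omega
  have hlb : ∀ m ∈ {m | ∃ S : Set (ZMod n), (cycleCube n).IsDecyclingSet S ∧
      S.ncard = m}, 2*k+1 ≤ m := by
    rintro m ⟨S, hS, rfl⟩
    exact DCC.lower_bound n k hn hk S hS
  refine le_antisymm (Nat.sInf_le hmem) ?_
  exact hlb _ (Nat.sInf_mem ⟨_, hmem⟩)
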